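/- Let M be a matroid and let N be a matroid whose ground set is the set of circuits of M. Then the following are equivalent: (i) for all circuits C₁, C₂ of M with |C₁ ∪ C₂| − r_M(C₁ ∪ C₂) = 2, every circuit C of M with C ⊆ C₁ ∪ C₂ satisfies C ∈ cl_N({C₁, C₂}); (ii) for every perfect collection 𝒞' of circuits of M, every circuit C of M with C ⊆ ∪𝒞' satisfies C ∈ cl_N(𝒞'). -/

import Mathlib

open Set Matroid
open scoped Matroid

namespace PaperLift

variable {α : Type} {β : Type}

/-- A circuit of a matroid: a minimal dependent set. -/
def Circuit (M : Matroid α) (C : Set α) : Prop :=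
  M.Dep C ∧ ∀ D, D ⊂ C → M.Indep D

/-- The rank of a set in a matroid: the supremum of cardinalities of independent subsets. -/
noncomputable def rk (M : Matroid α) (X : Set α) : ℕ :=
  sSup {n | ∃ I, M.Indep I ∧ I ⊆ X ∧ I.ncard = n}

/-- The rank of a matroid. -/
noncomputable def rank (M : Matroid α) : ℕ := rk M M.E

/-- Deletion of a set from a matroid. -/
def delete (M : Matroid α) (D : Set α) : Matroid α := M ↾ (M.E \ D)

/-- Contraction of a set in a matroid, defined by duality. -/
noncomputable def contract (M : Matroid α) (C : Set α) : Matroid α := ((M✶) ↾ (M.E \ C))✶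

/-- A hyperplane: a maximal proper flat. -/
def Hyperplane (M : Matroid α) (H : Set α) : Prop :=
  M.IsFlat H ∧ H ≠ M.E ∧ ∀ F, M.IsFlat F → H ⊂ F → F = M.E

/-- A circuit-hyperplane: a circuit that is also a hyperplane. -/
def CircuitHyperplane (M : Matroid α) (C : Set α) : Prop :=
  Circuit M C ∧ Hyperplane M C

/-- `L` is a lift of `M`: there is a matroid `K` on a ground set `E ∪ F`, with `F` disjoint
from `E = M.E`, such that `M = K / F` and `L = K \ F` (up to the canonical embedding). -/
def IsLiftOf (L M : Matroid α) : Prop :=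
  L.E = M.E ∧ ∃ (β : Type) (K : Matroid (α ⊕ β)) (F : Set (α ⊕ β)),
    Disjoint (Sum.inl '' M.E) F ∧ K.E = Sum.inl '' M.E ∪ F ∧
    contract K F = M.map Sum.inl Sum.inl_injective.injOn ∧
    delete K F = L.map Sum.inl Sum.inl_injective.injOn

/-- `N`, a matroid whose ground set is the set of circuits of `M`, satisfies the lift
condition for `M`. -/
def LiftCondition (M : Matroid α) (N : Matroid (Set α)) : Prop :=
  N.E = {C | Circuit M C} ∧
  ∀ C₁ C₂, Circuit M C₁ → Circuit M C₂ →
    (C₁ ∪ C₂).ncard = rk M (C₁ ∪ C₂) + 2 →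
    ∀ C, Circuit M C → C ⊆ C₁ ∪ C₂ → C ∈ N.closure {C₁, C₂}

/-- `L` has the rank function of the lift `M^N` of `M` constructed from `N`. -/
def IsLiftMatroid (M : Matroid α) (N : Matroid (Set α)) (L : Matroid α) : Prop :=
  L.E = M.E ∧ ∀ X ⊆ M.E, rk L X = rk M X + rk N {C | Circuit M C ∧ C ⊆ X}

/-- Matroid isomorphism: a bijection between ground sets preserving independence
in both directions. -/
def Iso (M : Matroid α) (N : Matroid β) : Prop :=
  ∃ e : α → β, InjOn e M.E ∧ e '' M.E = N.E ∧ ∀ I ⊆ M.E, (M.Indep I ↔ N.Indep (e '' I))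

/-- Representability of a matroid over a field `F`. -/
def Representable (M : Matroid α) (F : Type) [Field F] : Prop :=
  ∃ (W : Type) (_ : AddCommGroup W) (_ : Module F W) (φ : α → W),
    ∀ I ⊆ M.E, (M.Indep I ↔ InjOn φ I ∧ LinearIndependent F (fun e : I => φ e))

/-- A rank-`r` matroid is sparse paving if every `r`-element subset of the ground set is
either a base or a circuit-hyperplane. -/
def SparsePaving (M : Matroid α) : Prop :=
  ∀ S ⊆ M.E, S.ncard = rank M → (M.IsBase S ∨ CircuitHyperplane M S)

/-- A perfect collection of circuits. -/
def Perfect (M : Matroid α) (Cs : Set (Set α)) : Prop :=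
  Cs.Finite ∧ (∀ C ∈ Cs, Circuit M C) ∧
  (⋃₀ Cs).ncard = rk M (⋃₀ Cs) + Cs.ncard ∧
  ∀ C ∈ Cs, ¬ C ⊆ ⋃₀ (Cs \ {C})

/-- A linear class of circuits. -/
def LinearClass (M : Matroid α) (𝒞 : Set (Set α)) : Prop :=
  (∀ C ∈ 𝒞, Circuit M C) ∧
  ∀ C₁ ∈ 𝒞, ∀ C₂ ∈ 𝒞, (C₁ ∪ C₂).ncard = rk M (C₁ ∪ C₂) + 2 →
    ∀ C, Circuit M C → C ⊆ C₁ ∪ C₂ → C ∈ 𝒞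

/-- The circulant sets `C_i ⊆ [2t]` from the construction of `K(r,t)`. -/
def Ci (r t i : ℕ) : Set ℕ :=
  (fun k => (k + 2 * (i - 1) - 1) % (2 * t) + 1) '' (Set.Icc 1 (r - 2))

/-- The family `𝒞'(r,t)`. -/
def CC' (r t : ℕ) : Set (Set ℕ) :=
  (fun i => Ci r t i ∪ {2 * t + 1, 2 * t + 2}) '' (Set.Icc 1 t)

/-- The family `𝒞''(r,t)`. -/
def CC'' (r t : ℕ) : Set (Set ℕ) :=
  (fun i => Ci r t i ∪ Ci r t (i + 1)) '' (Set.Icc 1 (t - 1))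

/-- `K` is the matroid `K(r,t)`: a rank-`r` matroid on `[2t+2]` in which every `r`-element
subset is a base or a circuit-hyperplane, whose circuit-hyperplanes are exactly the members
of `𝒞'(r,t) ∪ 𝒞''(r,t)`. -/
def IsKrt (r t : ℕ) (K : Matroid ℕ) : Prop :=
  K.E = Set.Icc 1 (2 * t + 2) ∧ rank K = r ∧
  (∀ S ⊆ K.E, S.ncard = r → (K.IsBase S ∨ CircuitHyperplane K S)) ∧
  (∀ S, CircuitHyperplane K S ↔ S ∈ CC' r t ∪ CC'' r t)

/-- A group partition: a partition of the non-identity elements such that each part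
together with the identity is a subgroup. -/
def GroupPartition (Γ : Type) [Group Γ] (𝒜 : Set (Set Γ)) : Prop :=
  (∀ A ∈ 𝒜, A.Nonempty) ∧ (⋃₀ 𝒜 = {(1 : Γ)}ᶜ) ∧
  (∀ A ∈ 𝒜, ∀ B ∈ 𝒜, A ≠ B → Disjoint A B) ∧
  (∀ A ∈ 𝒜, ∃ H : Subgroup Γ, (H : Set Γ) = insert 1 A)



/-! ### Auxiliary lemmas for `stmt5` -/

section Stmt5Aux

variable {M : Matroid α}

lemma aux_ncard_le_rk (hM : M.E.Finite) {J X : Set α} (hJ : M.Indep J) (hJX : J ⊆ X) :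
    J.ncard ≤ rk M X := by
  apply le_csSup
  · refine ⟨M.E.ncard, ?_⟩
    rintro n ⟨I, hI, -, rfl⟩
    exact ncard_le_ncard hI.subset_ground hM
  · exact ⟨J, hJ, hJX, rfl⟩

lemma aux_rk_eq (hM : M.E.Finite) {I X : Set α} (hIX : M.IsBasis I X) : rk M X = I.ncard := by
  refine le_antisymm (csSup_le ⟨0, ∅, M.empty_indep, empty_subset _, by simp⟩ ?_)
    (aux_ncard_le_rk hM hIX.indep hIX.subset)
  rintro n ⟨J, hJ, hJX, rfl⟩
  obtain ⟨J', hJ', hJJ'⟩ := hJ.subset_isBasis_of_subset hJX hIX.subset_ground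
  have hcard : J'.encard = I.encard := hJ'.encard_eq_encard hIX
  have hJ'fin : J'.Finite := hM.subset hJ'.indep.subset_ground
  have : J'.ncard = I.ncard := by
    rw [ncard_def, hcard, ← ncard_def]
  exact this ▸ ncard_le_ncard hJJ' hJ'fin

lemma aux_rk_indep (hM : M.E.Finite) {I : Set α} (hI : M.Indep I) : rk M I = I.ncard :=
  aux_rk_eq hM hI.isBasis_self

lemma aux_rk_mono (hM : M.E.Finite) {X Y : Set α} (hXY : X ⊆ Y) (hY : Y ⊆ M.E) :
    rk M X ≤ rk M Y := by
  obtain ⟨I, hI⟩ := M.exists_isBasis X (hXY.trans hY)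
  rw [aux_rk_eq hM hI]
  exact aux_ncard_le_rk hM hI.indep (hI.subset.trans hXY)

lemma aux_rk_submod (hM : M.E.Finite) {X Y : Set α} (hX : X ⊆ M.E) (hY : Y ⊆ M.E) :
    rk M (X ∪ Y) + rk M (X ∩ Y) ≤ rk M X + rk M Y := by
  obtain ⟨I, hI⟩ := M.exists_isBasis (X ∩ Y) (inter_subset_left.trans hX)
  obtain ⟨J, hJ, hIJ⟩ := hI.indep.subset_isBasis_of_subset
    (hI.subset.trans (inter_subset_left.trans subset_union_left)) (union_subset hX hY)
  have hJfin : J.Finite := hM.subset hJ.indep.subset_ground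
  rw [aux_rk_eq hM hI, aux_rk_eq hM hJ]
  have h1 : (J ∩ X).ncard ≤ rk M X := aux_ncard_le_rk hM (hJ.indep.inter_right X) inter_subset_right
  have h2 : (J ∩ Y).ncard ≤ rk M Y := aux_ncard_le_rk hM (hJ.indep.inter_right Y) inter_subset_right
  have h3 : (J ∩ X) ∪ (J ∩ Y) = J := by
    rw [← inter_union_distrib_left]; exact inter_eq_left.2 hJ.subset
  have h4 : I ⊆ (J ∩ X) ∩ (J ∩ Y) :=
    subset_inter (subset_inter hIJ (hI.subset.trans inter_subset_left))
      (subset_inter hIJ (hI.subset.trans inter_subset_right))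
  have h5 := ncard_union_add_ncard_inter (J ∩ X) (J ∩ Y) (hJfin.subset inter_subset_left)
    (hJfin.subset inter_subset_left)
  rw [h3] at h5
  have h6 : I.ncard ≤ ((J ∩ X) ∩ (J ∩ Y)).ncard :=
    ncard_le_ncard h4 (hJfin.subset (inter_subset_left.trans inter_subset_left))
  omega

lemma Circuit.aux_subset_ground {C : Set α} (hC : Circuit M C) : C ⊆ M.E :=
  hC.1.subset_ground

lemma Circuit.aux_nonempty {C : Set α} (hC : Circuit M C) : C.Nonempty := hC.1.nonempty

lemma Circuit.eq_of_subset {C D : Set α} (hC : Circuit M C) (hD : Circuit M D)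
    (h : C ⊆ D) : C = D := by
  by_contra hne
  exact (hD.2 C (ssubset_of_ne_of_subset hne h)).not_dep hC.1

/-- A circuit has rank one less than its cardinality. -/
lemma Circuit.aux_ncard_eq (hM : M.E.Finite) {C : Set α} (hC : Circuit M C) :
    C.ncard = rk M C + 1 := by
  obtain ⟨x, hx⟩ := hC.aux_nonempty
  have hCfin : C.Finite := hM.subset hC.aux_subset_ground
  have hI : M.Indep (C \ {x}) := hC.2 _ (sdiff_singleton_ssubset.2 hx)
  have hB : M.IsBasis (C \ {x}) C := by
    refine hI.isBasis_of_forall_insert diff_subset ?_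
    rintro e ⟨heC, he⟩
    have : e = x := by
      by_contra h
      exact he ⟨heC, h⟩
    subst this
    rw [insert_diff_singleton, insert_eq_of_mem hx]
    exact hC.1
  rw [aux_rk_eq hM hB, ncard_diff_singleton_add_one hx hCfin]

/-- Supermodular nullity step: adding a circuit not contained in `X` increases nullity. -/
lemma aux_nullity_step (hM : M.E.Finite) {X C : Set α} (hC : Circuit M C) (hX : X ⊆ M.E)
    (hns : ¬ C ⊆ X) : rk M (X ∪ C) + 1 + X.ncard ≤ rk M X + (X ∪ C).ncard := by
  have hCE := hC.aux_subset_ground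
  have hXfin : X.Finite := hM.subset hX
  have hCfin : C.Finite := hM.subset hCE
  have hsub := aux_rk_submod hM hX hCE
  have hXC : M.Indep (X ∩ C) := hC.2 _ (ssubset_of_ne_of_subset
    (fun h => hns (by rw [← h]; exact inter_subset_left)) inter_subset_right)
  have h1 : rk M (X ∩ C) = (X ∩ C).ncard := aux_rk_indep hM hXC
  have h2 : C.ncard = rk M C + 1 := hC.aux_ncard_eq hM
  have h3 := ncard_union_add_ncard_inter X C hXfin hCfin
  omega

/-- Monotonicity of nullity. -/
lemma aux_nullity_mono (hM : M.E.Finite) {X Y : Set α} (hXY : X ⊆ Y) (hY : Y ⊆ M.E) :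
    rk M Y + X.ncard ≤ rk M X + Y.ncard := by
  have hX : X ⊆ M.E := hXY.trans hY
  obtain ⟨I, hI⟩ := M.exists_isBasis X hX
  obtain ⟨J, hJ, hIJ⟩ := hI.indep.subset_isBasis_of_subset (hI.subset.trans hXY) hY
  have hJfin : J.Finite := hM.subset hJ.indep.subset_ground
  have hYfin : Y.Finite := hM.subset hY
  have hXfin : X.Finite := hYfin.subset hXY
  rw [aux_rk_eq hM hI, aux_rk_eq hM hJ]
  have hJX : J ∩ X = I :=
    (hI.eq_of_subset_indep (hJ.indep.inter_right X) (subset_inter hIJ hI.subset)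
      inter_subset_right).symm
  have h1 : J.ncard = (J ∩ X).ncard + (J \ X).ncard := by
    rw [← ncard_union_add_ncard_inter _ _ (hJfin.subset inter_subset_left) hJfin.diff,
      inter_union_diff]
    have : (J ∩ X) ∩ (J \ X) = ∅ := by
      ext a; simp only [mem_inter_iff, mem_diff, mem_empty_iff_false, iff_false]
      tauto
    rw [this]; simp
  have h2 : (J \ X).ncard ≤ (Y \ X).ncard :=
    ncard_le_ncard (diff_subset_diff_left hJ.subset) hYfin.diff
  have h3 : Y.ncard = X.ncard + (Y \ X).ncard := by
    rw [← ncard_union_add_ncard_inter _ _ hXfin hYfin.diff, union_diff_cancel hXY]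
    have : X ∩ (Y \ X) = ∅ := by
      ext a; simp only [mem_inter_iff, mem_diff, mem_empty_iff_false, iff_false]; tauto
    rw [this]; simp
  rw [hJX] at h1
  omega

lemma aux_circuit_mem_of_subset_insert {B C : Set α} {f : α} (hB : M.Indep B)
    (hC : Circuit M C) (h : C ⊆ insert f B) : f ∈ C := by
  by_contra hf
  exact (hB.subset (fun x hx => (h hx).resolve_left (fun h' => hf (h' ▸ hx)))).not_dep hC.1

/-- Uniqueness of the circuit in `insert f B` for `B` independent. -/
lemma aux_circuit_unique (hM : M.E.Finite) {B C₁ C₂ : Set α} {f : α} (hB : M.Indep B)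
    (hC₁ : Circuit M C₁) (hC₂ : Circuit M C₂) (h₁ : C₁ ⊆ insert f B) (h₂ : C₂ ⊆ insert f B) :
    C₁ = C₂ := by
  by_contra hne
  have hfC₁ : f ∈ C₁ := aux_circuit_mem_of_subset_insert hB hC₁ h₁
  have hfE : insert f B ⊆ M.E := insert_subset (hC₁.aux_subset_ground hfC₁) hB.subset_ground
  have hns : ¬ C₂ ⊆ C₁ := fun h => hne (hC₂.eq_of_subset hC₁ h).symm
  have hstep := aux_nullity_step hM hC₂ hC₁.aux_subset_ground hns
  have hcard := hC₁.aux_ncard_eq hM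
  have hmono := aux_nullity_mono hM (union_subset h₁ h₂) hfE
  have hrkB : rk M B ≤ rk M (insert f B) := aux_rk_mono hM (subset_insert f B) hfE
  have hrkB' : rk M B = B.ncard := aux_rk_indep hM hB
  have hle : (insert f B).ncard ≤ B.ncard + 1 := ncard_insert_le f B
  omega

/-- Every dependent set contains a circuit. -/
lemma aux_exists_circuit_subset (hM : M.E.Finite) {X : Set α} (hX : M.Dep X) :
    ∃ C, C ⊆ X ∧ Circuit M C := by
  obtain ⟨n, hn⟩ : ∃ n, X.ncard ≤ n := ⟨X.ncard, le_rfl⟩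
  induction n generalizing X with
  | zero =>
    exfalso
    have : X = ∅ := ncard_eq_zero (hM.subset hX.subset_ground) |>.1 (Nat.le_zero.1 hn)
    exact (this ▸ hX).not_indep M.empty_indep
  | succ n ih =>
    by_cases h : ∀ D, D ⊂ X → M.Indep D
    · exact ⟨X, Subset.rfl, hX, h⟩
    push_neg at h
    obtain ⟨D, hDX, hD⟩ := h
    have hDdep : M.Dep D := ⟨hD, hDX.subset.trans hX.subset_ground⟩
    have hlt : D.ncard < X.ncard := ncard_lt_ncard hDX (hM.subset hX.subset_ground)
    obtain ⟨C, hCD, hC⟩ := ih hDdep (by omega)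
    exact ⟨C, hCD.trans hDX.subset, hC⟩

/-- All circuits contained in `insert f B` for some `f ∈ Y`. -/
def Fund (M : Matroid α) (Y B : Set α) : Set (Set α) :=
  {C | Circuit M C ∧ ∃ f ∈ Y, C ⊆ insert f B}

variable {N : Matroid (Set α)}

lemma Fund_subset_ground (hNE : N.E = {C | Circuit M C}) {Y B : Set α} :
    Fund M Y B ⊆ N.E := by
  rintro C ⟨hC, -⟩
  rw [hNE]; exact hC

/-- Key step: any circuit in `B ∪ {x, g}` lies in the `N`-closure of the fundamental
circuits, using the pair hypothesis. -/
lemma aux_pair_step (hM : M.E.Finite) (hNE : N.E = {C | Circuit M C})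
    (hHyp : ∀ C₁ C₂, Circuit M C₁ → Circuit M C₂ → (C₁ ∪ C₂).ncard = rk M (C₁ ∪ C₂) + 2 →
      ∀ C, Circuit M C → C ⊆ C₁ ∪ C₂ → C ∈ N.closure {C₁, C₂})
    {Y B : Set α} (hB : M.IsBasis B Y) {x g : α} (hx : x ∈ Y \ B) (hg : g ∈ Y \ B)
    {D : Set α} (hD : Circuit M D) (hDsub : D ⊆ insert x (insert g B)) :
    D ∈ N.closure (Fund M Y B) := by
  have hSE : Fund M Y B ⊆ N.E := Fund_subset_ground hNE
  have hBE : B ⊆ M.E := hB.indep.subset_ground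
  have hYE : Y ⊆ M.E := hB.subset_ground
  have hBfin : B.Finite := hM.subset hBE
  obtain ⟨P, hPsub, hP⟩ := aux_exists_circuit_subset hM (hB.insert_dep hx)
  have hxP : x ∈ P := aux_circuit_mem_of_subset_insert hB.indep hP hPsub
  have hPF : P ∈ Fund M Y B := ⟨hP, x, hx.1, hPsub⟩
  by_cases hxg : x = g
  · subst hxg
    rw [insert_idem] at hDsub
    rw [aux_circuit_unique hM hB.indep hD hP hDsub hPsub]
    exact N.subset_closure _ hSE hPF
  obtain ⟨Q, hQsub, hQ⟩ := aux_exists_circuit_subset hM (hB.insert_dep hg)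
  have hgQ : g ∈ Q := aux_circuit_mem_of_subset_insert hB.indep hQ hQsub
  have hQF : Q ∈ Fund M Y B := ⟨hQ, g, hg.1, hQsub⟩
  by_cases hgD : g ∈ D
  swap
  · have hDx : D ⊆ insert x B := by
      intro a ha
      rcases hDsub ha with rfl | h
      · exact mem_insert _ _
      rcases h with rfl | h
      · exact absurd ha hgD
      · exact mem_insert_of_mem _ h
    rw [aux_circuit_unique hM hB.indep hD hP hDx hPsub]
    exact N.subset_closure _ hSE hPF
  by_cases hxD : x ∈ D
  swap
  · have hDg : D ⊆ insert g B := by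
      intro a ha
      rcases hDsub ha with rfl | h
      · exact absurd ha hxD
      · exact h
    rw [aux_circuit_unique hM hB.indep hD hQ hDg hQsub]
    exact N.subset_closure _ hSE hQF
  have hPQ : P ≠ Q := by
    intro h
    have : g ∈ P := h ▸ hgQ
    rcases hPsub this with rfl | h'
    · exact hxg rfl
    · exact hg.2 h'
  set W : Set α := insert x (insert g B) with hW
  have hWY : W ⊆ Y := insert_subset hx.1 (insert_subset hg.1 hB.subset)
  have hWE : W ⊆ M.E := hWY.trans hYE
  have hBW : M.IsBasis B W := hB.isBasis_subset
    ((subset_insert _ _).trans (subset_insert _ _)) hWY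
  have hrkW : rk M W = B.ncard := aux_rk_eq hM hBW
  have hWcard : W.ncard = B.ncard + 2 := by
    rw [hW, ncard_insert_of_notMem (by simp [hxg, hx.2]) (hBfin.insert g),
      ncard_insert_of_notMem hg.2 hBfin]
  have hPQsubW : P ∪ Q ⊆ W := union_subset
    (hPsub.trans (insert_subset_insert (subset_insert _ _)))
    (hQsub.trans (subset_insert _ _))
  have hQP : ¬ Q ⊆ P := fun h => hPQ (hQ.eq_of_subset hP h).symm
  have h1 := aux_nullity_step hM hQ hP.aux_subset_ground hQP
  have h2 := hP.aux_ncard_eq hM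
  have h3 := aux_nullity_mono hM hPQsubW hWE
  have hcard : (P ∪ Q).ncard = rk M (P ∪ Q) + 2 := by omega
  have hDPQ : D ⊆ P ∪ Q := by
    by_contra hns
    have h4 := aux_nullity_step hM hD
      (union_subset hP.aux_subset_ground hQ.aux_subset_ground) hns
    have h5 := aux_nullity_mono hM (union_subset hPQsubW hDsub) hWE
    omega
  have := hHyp P Q hP hQ hcard D hD hDPQ
  refine N.closure_subset_closure ?_ this
  exact pair_subset hPF hQF

/-- Exchange induction: fundamental circuits of any basis of `Y` lie in the `N`-closure of
the fundamental circuits of a fixed basis `B`. -/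
lemma aux_exchange_closure (hM : M.E.Finite) (hNE : N.E = {C | Circuit M C})
    (hHyp : ∀ C₁ C₂, Circuit M C₁ → Circuit M C₂ → (C₁ ∪ C₂).ncard = rk M (C₁ ∪ C₂) + 2 →
      ∀ C, Circuit M C → C ⊆ C₁ ∪ C₂ → C ∈ N.closure {C₁, C₂})
    {Y B B' : Set α} (hB : M.IsBasis B Y) (hB' : M.IsBasis B' Y) :
    Fund M Y B' ⊆ N.closure (Fund M Y B) := by
  have hSE : Fund M Y B ⊆ N.E := Fund_subset_ground hNE
  obtain ⟨n, hn⟩ : ∃ n, (B' \ B).ncard ≤ n := ⟨_, le_rfl⟩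
  induction n generalizing B' with
  | zero =>
    have hsub : B' ⊆ B := diff_eq_empty.1
      (ncard_eq_zero ((hM.subset hB'.indep.subset_ground).diff) |>.1 (Nat.le_zero.1 hn))
    have : B' = B := hB'.eq_of_subset_indep hB.indep hsub hB.subset
    subst this
    exact N.subset_closure _ hSE
  | succ n ih =>
    rcases eq_empty_or_nonempty (B' \ B) with hemp | ⟨x, hx⟩
    · exact ih hB' (by rw [hemp]; simp)
    have hB'r : (M ↾ Y).IsBase B' := hB'.restrict_isBase
    have hBr : (M ↾ Y).IsBase B := hB.restrict_isBase
    obtain ⟨y, hy, hBase''⟩ := hB'r.exchange hBr hx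
    set B'' : Set α := insert y (B' \ {x}) with hB''def
    have hB'' : M.IsBasis B'' Y := (isBase_restrict_iff hB.subset_ground).1 hBase''
    have hxB' : x ∈ B' := hx.1
    have hxB : x ∉ B := hx.2
    have hyB : y ∈ B := hy.1
    have hdiff : B'' \ B = (B' \ B) \ {x} := by
      ext a
      simp only [hB''def, mem_diff, mem_insert_iff, mem_singleton_iff]
      constructor
      · rintro ⟨rfl | ⟨haB', hax⟩, haB⟩
        · exact absurd hyB haB
        · exact ⟨⟨haB', haB⟩, hax⟩
      · rintro ⟨⟨haB', haB⟩, hax⟩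
        exact ⟨Or.inr ⟨haB', hax⟩, haB⟩
    have hlt : (B'' \ B).ncard ≤ n := by
      rw [hdiff]
      have hfin : (B' \ B).Finite := (hM.subset hB'.indep.subset_ground).diff
      have := ncard_diff_singleton_lt_of_mem hx hfin
      omega
    have hIH : Fund M Y B'' ⊆ N.closure (Fund M Y B) := ih hB'' hlt
    have hstep : Fund M Y B' ⊆ N.closure (Fund M Y B'') := by
      rintro D ⟨hD, g, hgY, hDsub⟩
      have hxB'' : x ∉ B'' := by
        intro h
        rcases mem_insert_iff.1 h with rfl | hh
        · exact hxB hyB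
        · exact hh.2 (by simp)
      have hsub2 : D ⊆ insert g (insert x B'') := by
        intro a ha
        rcases hDsub ha with rfl | haB'
        · exact mem_insert _ _
        by_cases hax : a = x
        · exact mem_insert_of_mem _ (hax ▸ mem_insert _ _)
        · exact mem_insert_of_mem _ (mem_insert_of_mem _ (mem_insert_of_mem _ ⟨haB', hax⟩))
      by_cases hgB'' : g ∈ insert x B''
      · have hDx : D ⊆ insert x B'' := by
          intro a ha
          rcases hsub2 ha with rfl | h
          · exact hgB''
          · exact h
        exact N.subset_closure _ (Fund_subset_ground hNE)
          ⟨hD, x, hB'.subset hxB', hDx⟩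
      · rw [insert_comm] at hsub2
        exact aux_pair_step hM hNE hHyp hB'' ⟨hB'.subset hxB', hxB''⟩
          ⟨hgY, fun h => hgB'' (mem_insert_of_mem _ h)⟩ hD hsub2
    exact fun D hD => (N.closure_subset_closure_of_subset_closure hIH) (hstep hD)

/-- Every circuit contained in the union of a perfect collection lies in the `N`-closure
of the collection. -/
lemma aux_perfect_closure (hM : M.E.Finite) (hNE : N.E = {C | Circuit M C})
    (hHyp : ∀ C₁ C₂, Circuit M C₁ → Circuit M C₂ → (C₁ ∪ C₂).ncard = rk M (C₁ ∪ C₂) + 2 →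
      ∀ C, Circuit M C → C ⊆ C₁ ∪ C₂ → C ∈ N.closure {C₁, C₂})
    {Cs : Set (Set α)} (hCs : Perfect M Cs) {C : Set α} (hC : Circuit M C)
    (hCsub : C ⊆ ⋃₀ Cs) : C ∈ N.closure Cs := by
  obtain ⟨hfin, hcirc, hnul, hpriv⟩ := hCs
  set F : Set α := ⋃₀ Cs with hF
  have hFE : F ⊆ M.E := sUnion_subset fun D hD => (hcirc D hD).aux_subset_ground
  have hFfin : F.Finite := hM.subset hFE
  obtain ⟨e, he⟩ := hC.aux_nonempty
  have : Nonempty α := ⟨e⟩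
  have hchoice : ∀ D ∈ Cs, ∃ x, x ∈ D ∧ x ∉ ⋃₀ (Cs \ {D}) := by
    intro D hD
    obtain ⟨x, hx1, hx2⟩ := not_subset.1 (hpriv D hD)
    exact ⟨x, hx1, hx2⟩
  choose! f hf1 hf2 using hchoice
  have hf3 : ∀ D ∈ Cs, ∀ D' ∈ Cs, f D ∈ D' → D' = D := by
    intro D hD D' hD' hmem
    by_contra hne
    exact hf2 D hD ⟨D', ⟨hD', hne⟩, hmem⟩
  set Φ : Set α := f '' Cs with hΦ
  have hΦsub : Φ ⊆ F := by
    rintro a ⟨D, hD, rfl⟩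
    exact ⟨D, hD, hf1 D hD⟩
  have hinj : InjOn f Cs := by
    intro D hD D' hD' heq
    have hm : f D ∈ D' := by rw [heq]; exact hf1 D' hD'
    exact (hf3 D hD D' hD' hm).symm
  have hΦcard : Φ.ncard = Cs.ncard := ncard_image_of_injOn hinj
  set B : Set α := F \ Φ with hB
  have hBF : B ⊆ F := diff_subset
  have hBE : B ⊆ M.E := hBF.trans hFE
  have hBI : M.Indep B := by
    by_contra hdep
    obtain ⟨D₀, hD₀sub, hD₀⟩ := aux_exists_circuit_subset hM (dep_of_not_indep hdep hBE)
    have key : ∀ n (Ds : Set (Set α)), Ds ⊆ Cs → Ds.ncard = n →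
        rk M (D₀ ∪ ⋃₀ Ds) + 1 + n ≤ (D₀ ∪ ⋃₀ Ds).ncard := by
      intro n
      induction n with
      | zero =>
        intro Ds hsub hcard
        have : Ds = ∅ := ncard_eq_zero (hfin.subset hsub) |>.1 hcard
        subst this
        simp only [sUnion_empty, union_empty]
        have := hD₀.aux_ncard_eq hM
        omega
      | succ n ih =>
        intro Ds hsub hcard
        have hne : Ds.Nonempty := by
          rw [nonempty_iff_ne_empty]
          rintro rfl
          simp at hcard
        obtain ⟨D, hD⟩ := hne
        have hDCs : D ∈ Cs := hsub hD
        set Ds' : Set (Set α) := Ds \ {D} with hDs'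
        have hDs'sub : Ds' ⊆ Cs := diff_subset.trans hsub
        have hDs'card : Ds'.ncard = n := by
          rw [hDs']
          have := ncard_diff_singleton_add_one hD (hfin.subset hsub)
          omega
        have hIH := ih Ds' hDs'sub hDs'card
        have hns : ¬ D ⊆ D₀ ∪ ⋃₀ Ds' := by
          intro hsub'
          rcases hsub' (hf1 D hDCs) with h | h
          · exact (hD₀sub h).2 ⟨D, hDCs, rfl⟩
          · have hDs'sub2 : Ds' ⊆ Cs \ {D} := by
              rw [hDs']; exact fun X hX => ⟨hsub hX.1, hX.2⟩
            exact hf2 D hDCs (sUnion_mono hDs'sub2 h)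
        have hXE : D₀ ∪ ⋃₀ Ds' ⊆ M.E :=
          union_subset hD₀.aux_subset_ground
            (sUnion_subset fun X hX => (hcirc X (hDs'sub hX)).aux_subset_ground)
        have hstep := aux_nullity_step hM (hcirc D hDCs) hXE hns
        have hunion : (D₀ ∪ ⋃₀ Ds') ∪ D = D₀ ∪ ⋃₀ Ds := by
          have : ⋃₀ Ds = D ∪ ⋃₀ Ds' := by
            rw [hDs', ← sUnion_insert, insert_diff_singleton, insert_eq_of_mem hD]
          rw [this, union_comm D, ← union_assoc]
        rw [hunion] at hstep
        omega
    have hfinal := key Cs.ncard Cs Subset.rfl rfl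
    have : D₀ ∪ ⋃₀ Cs = F := union_eq_self_of_subset_left (hD₀sub.trans hBF)
    rw [← hF, this] at hfinal
    omega
  obtain ⟨B₀, hB₀, hBB₀⟩ := hBI.subset_isBasis_of_subset hBF hFE
  have hBcard : B.ncard = F.ncard - Φ.ncard := ncard_diff hΦsub (hFfin.subset hΦsub)
  have hB₀card : rk M F = B₀.ncard := aux_rk_eq hM hB₀
  have hB₀fin : B₀.Finite := hFfin.subset hB₀.subset
  have hBeq : B = B₀ := by
    apply eq_of_subset_of_ncard_le hBB₀ _ hB₀fin
    have hΦle : Φ.ncard ≤ F.ncard := ncard_le_ncard hΦsub hFfin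
    omega
  have hBbasis : M.IsBasis B F := hBeq ▸ hB₀
  have hFund : Fund M F B ⊆ Cs := by
    rintro D' ⟨hD', g, hgF, hsub⟩
    have hgΦ : g ∈ Φ := by
      by_contra hgΦ
      by_cases hgB : g ∈ B
      · rw [insert_eq_of_mem hgB] at hsub
        exact (hBI.subset hsub).not_dep hD'.1
      · exact hgB ⟨hgF, hgΦ⟩
    obtain ⟨D, hD, rfl⟩ := hgΦ
    have hDsub : D ⊆ insert (f D) B := by
      intro a ha
      by_cases haΦ : a ∈ Φ
      · obtain ⟨D'', hD'', rfl⟩ := haΦ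
        have hDD : D = D'' := hf3 D'' hD'' D hD ha
        rw [hDD]
        exact mem_insert _ _
      · exact mem_insert_of_mem _ ⟨⟨D, hD, ha⟩, haΦ⟩
    rw [aux_circuit_unique hM hBI hD' (hcirc D hD) hsub hDsub]
    exact hD
  have hCe : M.Indep (C \ {e}) := hC.2 _ (sdiff_singleton_ssubset.2 he)
  obtain ⟨B', hB', hsubB'⟩ := hCe.subset_isBasis_of_subset (diff_subset.trans hCsub) hFE
  have hCFund : C ∈ Fund M F B' := by
    refine ⟨hC, e, hCsub he, ?_⟩
    intro a ha
    by_cases hae : a = e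
    · exact hae ▸ mem_insert _ _
    · exact mem_insert_of_mem _ (hsubB' ⟨ha, hae⟩)
  have hchain := aux_exchange_closure hM hNE hHyp hBbasis hB' hCFund
  exact N.closure_subset_closure hFund hchain

end Stmt5Aux

/-- The modular-pair condition `(*')` and the perfect-collection condition `(*)` are
equivalent. -/
theorem stmt5 {α : Type} (M : Matroid α) (hM : M.E.Finite) (N : Matroid (Set α))
    (hNE : N.E = {C | Circuit M C}) :
    (∀ C₁ C₂, Circuit M C₁ → Circuit M C₂ → (C₁ ∪ C₂).ncard = rk M (C₁ ∪ C₂) + 2 →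
        ∀ C, Circuit M C → C ⊆ C₁ ∪ C₂ → C ∈ N.closure {C₁, C₂}) ↔
      (∀ Cs, Perfect M Cs → ∀ C, Circuit M C → C ⊆ ⋃₀ Cs → C ∈ N.closure Cs) := by
  constructor
  · intro hHyp Cs hCs C hC hsub
    exact aux_perfect_closure hM hNE hHyp hCs hC hsub
  · intro h C₁ C₂ hC₁ hC₂ hcard C hC hsub
    have hne : C₁ ≠ C₂ := by
      rintro rfl
      rw [union_self] at hcard
      have := hC₁.aux_ncard_eq hM
      omega
    have hperf : Perfect M {C₁, C₂} := by
      refine ⟨toFinite _, ?_, ?_, ?_⟩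
      · rintro D (rfl | rfl) <;> assumption
      · rw [sUnion_pair, ncard_pair hne]
        exact hcard
      · rintro D (rfl | rfl)
        · have hss : ({D, C₂} : Set (Set α)) \ {D} ⊆ {C₂} := by
            rintro X ⟨(rfl | rfl), hX2⟩
            · exact absurd rfl hX2
            · exact rfl
          intro hsub'
          have : D ⊆ C₂ := (hsub'.trans (sUnion_mono hss)).trans (by simp)
          exact hne (hC₁.eq_of_subset hC₂ this)
        · have hss : ({C₁, D} : Set (Set α)) \ {D} ⊆ {C₁} := by
            rintro X ⟨(rfl | rfl), hX2⟩
            · exact rfl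
            · exact absurd rfl hX2
          intro hsub'
          have : D ⊆ C₁ := (hsub'.trans (sUnion_mono hss)).trans (by simp)
          exact hne (hC₂.eq_of_subset hC₁ this).symm
    exact h {C₁, C₂} hperf C hC (by rwa [sUnion_pair])


end PaperLift
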